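/- arXiv:0809.4343 — 2 statements merged into one kernel-verified Lean document; each statement's English description precedes it below -/
import Mathlib

section
/- Let A, B, C be locally ordered 2-categories, V: A → B, W: B → C 2-functors with W a local equivalence (an equivalence on each hom-poset), and U = W ∘ V with a left 2-adjoint F ⊣ U with unit η. Then F ∘ W is left 2-adjoint to V, and the unit ξ of this adjunction satisfies W(ξ_B) = η_{WB} for every object B of B. -/
universe u v u' v' u₁ v₁ u₂ v₂ u₃ v₃

/-- A locally ordered 2-category: a category enriched in posets. -/
structure PreOrdCat : Type (max (u+1) (v+1)) where
  Obj : Type u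
  Hom : Obj → Obj → Type v
  str : ∀ A B : Obj, PartialOrder (Hom A B)
  comp : ∀ {A B C : Obj}, Hom B C → Hom A B → Hom A C
  one : ∀ A : Obj, Hom A A

attribute [instance] PreOrdCat.str

structure OrdCat extends PreOrdCat.{u, v} where
  comp_assoc : ∀ {A B C D : Obj} (h : Hom C D) (g : Hom B C) (f : Hom A B),
    comp (comp h g) f = comp h (comp g f)
  one_comp : ∀ {A B : Obj} (f : Hom A B), comp (one B) f = f
  comp_one : ∀ {A B : Obj} (f : Hom A B), comp f (one A) = f
  comp_mono : ∀ {A B C : Obj} {g g' : Hom B C} {f f' : Hom A B},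
    g ≤ g' → f ≤ f' → comp g f ≤ comp g' f'

/-- A 2-functor (Ord-enriched functor) between locally ordered 2-categories. -/
structure OrdFunctor (C : OrdCat.{u₁, v₁}) (D : OrdCat.{u₂, v₂}) where
  obj : C.Obj → D.Obj
  map : ∀ {A B : C.Obj}, C.Hom A B → D.Hom (obj A) (obj B)
  map_comp : ∀ {A B E : C.Obj} (g : C.Hom B E) (f : C.Hom A B),
    map (C.comp g f) = D.comp (map g) (map f)
  map_one : ∀ A : C.Obj, map (C.one A) = D.one (obj A)
  map_mono : ∀ {A B : C.Obj} {f g : C.Hom A B}, f ≤ g → map f ≤ map g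

/-- Composition of 2-functors (`F.comp G` is "first `G`, then `F`"). -/
def OrdFunctor.comp {C : OrdCat.{u₁, v₁}} {D : OrdCat.{u₂, v₂}} {E : OrdCat.{u₃, v₃}}
    (F : OrdFunctor D E) (G : OrdFunctor C D) : OrdFunctor C E where
  obj X := F.obj (G.obj X)
  map f := F.map (G.map f)
  map_comp g f := by
    show F.map (G.map (C.comp g f)) = _
    rw [G.map_comp, F.map_comp]
  map_one A := by
    show F.map (G.map (C.one A)) = _
    rw [G.map_one, F.map_one]
  map_mono h := F.map_mono (G.map_mono h)

/-- A local equivalence: an equivalence on each hom-poset. -/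
def OrdFunctor.IsLocalEquiv {B : OrdCat.{u₁, v₁}} {C : OrdCat.{u₂, v₂}}
    (W : OrdFunctor B C) : Prop :=
  ∀ {X Y : B.Obj},
    Function.Surjective (fun f : B.Hom X Y => W.map f) ∧
    ∀ f g : B.Hom X Y, W.map f ≤ W.map g ↔ f ≤ g

/-- A 2-adjunction `F ⊣ U` presented by unit and counit. -/
structure OrdAdj {C : OrdCat.{u₁, v₁}} {A : OrdCat.{u₂, v₂}}
    (F : OrdFunctor C A) (U : OrdFunctor A C) where
  unit : ∀ X : C.Obj, C.Hom X (U.obj (F.obj X))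
  counit : ∀ Y : A.Obj, A.Hom (F.obj (U.obj Y)) Y
  unit_natural : ∀ {X X' : C.Obj} (f : C.Hom X X'),
    C.comp (U.map (F.map f)) (unit X) = C.comp (unit X') f
  counit_natural : ∀ {Y Y' : A.Obj} (g : A.Hom Y Y'),
    A.comp g (counit Y) = A.comp (counit Y') (F.map (U.map g))
  tri1 : ∀ X : C.Obj, A.comp (counit (F.obj X)) (F.map (unit X)) = A.one (F.obj X)
  tri2 : ∀ Y : A.Obj, C.comp (U.map (counit Y)) (unit (U.obj Y)) = C.one (U.obj Y)

/-- given 2-functors `V : 𝒜 → ℬ`, `W : ℬ → 𝒞` with `W` a local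
equivalence and `U = W ∘ V`, and a left 2-adjoint `F ⊣ U`, the composite
`F ∘ W` is left 2-adjoint to `V`, with unit `ξ` satisfying `W(ξ_B) = η_{WB}`. -/
theorem stmt_5 (𝒜 ℬ 𝒞 : OrdCat.{u, v})
    (V : OrdFunctor 𝒜 ℬ) (W : OrdFunctor ℬ 𝒞) (hW : W.IsLocalEquiv)
    (F : OrdFunctor 𝒞 𝒜) (adj : OrdAdj F (W.comp V)) :
    ∃ adj' : OrdAdj (F.comp W) V,
      ∀ B : ℬ.Obj, W.map (adj'.unit B) = adj.unit (W.obj B) := by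
  have Winj : ∀ {X Y : ℬ.Obj} {f g : ℬ.Hom X Y}, W.map f = W.map g → f = g := by
    intro X Y f g h
    exact le_antisymm ((hW.2 f g).mp h.le) ((hW.2 g f).mp h.ge)
  -- choose the unit ξ as a W-preimage of η
  have hξ : ∀ B : ℬ.Obj, ∃ ξ : ℬ.Hom B (V.obj (F.obj (W.obj B))),
      W.map ξ = adj.unit (W.obj B) := fun B => hW.1 (adj.unit (W.obj B))
  choose ξ hξspec using hξ
  refine ⟨{ unit := ξ
            counit := fun Y => adj.counit Y
            unit_natural := ?_
            counit_natural := fun g => adj.counit_natural g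
            tri1 := ?_
            tri2 := ?_ }, fun B => hξspec B⟩
  · intro X X' f
    apply Winj
    show W.map (ℬ.comp (V.map (F.map (W.map f))) (ξ X)) = W.map (ℬ.comp (ξ X') f)
    rw [W.map_comp, W.map_comp, hξspec, hξspec]
    exact adj.unit_natural (W.map f)
  · intro X
    show 𝒜.comp (adj.counit (F.obj (W.obj X))) (F.map (W.map (ξ X))) = _
    rw [hξspec]
    exact adj.tri1 (W.obj X)
  · intro Y
    apply Winj
    show W.map (ℬ.comp (@V.map (F.obj (W.obj (V.obj Y))) Y (adj.counit Y)) (ξ (V.obj Y))) = W.map (ℬ.one (V.obj Y))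
    rw [W.map_comp, hξspec, W.map_one]
    exact adj.tri2 Y
end

section
/- Let Ω be a locale and (F, ≤) an ordered sheaf on Ω with associated Idm(Ω)-enriched category A. There is a bijection between downsets S ⊆ F_u ⊆ F (subsheaves satisfying internally: y ≤ x and x ∈ S implies y ∈ S) and presheaves φ: *_u ⇸ A (maps φ: A₀ → Ω with φ(x) ≤ u ∧ tx and A(y,x) ∧ φ(x) ≤ φ(y)), given by φ(x) = ⋁{ v ≤ tx | x|_v ∈ S(v) }; under this bijection the principal downset at x corresponds to the representable presheaf A(−, x). -/
universe u v

section SheafSetup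

variable {Ω : Type u} [Order.Frame Ω] {F : Ω → Type v}

/-- "The greatest level at which `x ∈ S`": the internal truth value of
membership of `x` in the subobject `S`. -/
def memLevel (res : ∀ {v w : Ω}, w ≤ v → F v → F w)
    (S : ∀ v : Ω, Set (F v)) (x : Σ v : Ω, F v) : Ω :=
  sSup {v : Ω | ∃ h : v ≤ x.1, res h x.2 ∈ S v}

/-- `S` is a downset of `(F, ≤)` truncated at `u`: a subsheaf of `F_u` which is
internally downclosed (`y ≤ x` and `x ∈ S` imply `y ∈ S`, read via the
`Idm(Ω)`-enriched hom `A(y,x)` = "the greatest level at which `y ≤ x`"). -/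
def IsDownset (res : ∀ {v w : Ω}, w ≤ v → F v → F w)
    (hom : (Σ v : Ω, F v) → (Σ v : Ω, F v) → Ω)
    (u : Ω) (S : ∀ v : Ω, Set (F v)) : Prop :=
  (∀ (v : Ω) (x : F v), x ∈ S v → v ≤ u) ∧
  (∀ (v w : Ω) (h : w ≤ v) (x : F v), x ∈ S v → res h x ∈ S w) ∧
  (∀ (v : Ω) (x : F v) (ws : Set Ω), sSup ws = v →
    (∀ w ∈ ws, ∀ h : w ≤ v, res h x ∈ S w) → x ∈ S v) ∧
  (∀ y x : Σ v : Ω, F v, hom y x ⊓ memLevel res S x ≤ memLevel res S y)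

/-- `φ` is a presheaf `*_u ⇸ A` on the `Idm(Ω)`-category `A` associated to
`(F, ≤)`. -/
def IsPresheafOn (hom : (Σ v : Ω, F v) → (Σ v : Ω, F v) → Ω)
    (u : Ω) (φ : (Σ v : Ω, F v) → Ω) : Prop :=
  (∀ x : Σ v : Ω, F v, φ x ≤ u ⊓ x.1) ∧
  (∀ y x : Σ v : Ω, F v, hom y x ⊓ φ x ≤ φ y)

/-- The principal downset at `x`: `y ∈ S_x` iff `y ≤ x` (internally). -/
def principalDownset (hom : (Σ v : Ω, F v) → (Σ v : Ω, F v) → Ω)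
    (x : Σ v : Ω, F v) : ∀ v : Ω, Set (F v) :=
  fun v => {y : F v | v ≤ hom ⟨v, y⟩ x}

end SheafSetup

/-- for a locale `Ω` and an ordered sheaf `(F, ≤)` on `Ω` with
associated `Idm(Ω)`-enriched category `A`, there is a bijection between
downsets `S ⊆ F_u ⊆ F` and presheaves `φ : *_u ⇸ A`, given by
`φ(x) = ⋁{ v ≤ tx ∣ x|_v ∈ S(v) }`; under it the principal downset at `x`
corresponds to the representable presheaf `A(−, x)`. -/
theorem stmt_19 (Ω : Type u) [Order.Frame Ω] (F : Ω → Type v)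
    (res : ∀ {v w : Ω}, w ≤ v → F v → F w)
    (hom : (Σ v : Ω, F v) → (Σ v : Ω, F v) → Ω)
    -- sheaf axioms for the restrictions
    (hres_id : ∀ (v : Ω) (x : F v), res (le_refl v) x = x)
    (hres_res : ∀ {v w z : Ω} (h1 : z ≤ w) (h2 : w ≤ v) (x : F v),
      res h1 (res h2 x) = res (h1.trans h2) x)
    -- `A` is an `Idm(Ω)`-category
    (hcomp : ∀ z y x : Σ v : Ω, F v, hom z y ⊓ hom y x ≤ hom z x)
    (hhom_le : ∀ y x : Σ v : Ω, F v, hom y x ≤ x.1 ⊓ y.1)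
    -- the key facts about restrictions
    (hkey1 : ∀ {v w : Ω} (h : w ≤ v) (x : F v), hom ⟨w, res h x⟩ ⟨v, x⟩ = w)
    (hkey2 : ∀ {v w : Ω} (h : w ≤ v) (x : F v), hom ⟨v, x⟩ ⟨w, res h x⟩ = w)
    -- hom is determined locally
    (hloc : ∀ (y x : Σ v : Ω, F v) (ws : Set Ω), (∀ w ∈ ws, w ≤ y.1) →
      sSup ws = y.1 → (∀ w ∈ ws, ∀ h : w ≤ y.1, w ≤ hom ⟨w, res h y.2⟩ x) →
      y.1 ≤ hom y x)
    (u : Ω) :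
    ∃ e : {S : ∀ v : Ω, Set (F v) // IsDownset res hom u S} ≃
          {φ : (Σ v : Ω, F v) → Ω // IsPresheafOn hom u φ},
      -- the bijection is given by "the greatest level at which `x ∈ S`"
      (∀ (S : {S : ∀ v : Ω, Set (F v) // IsDownset res hom u S})
          (x : Σ v : Ω, F v), (e S).1 x = memLevel res S.1 x) ∧
      -- principal downsets correspond to representable presheaves
      (∀ x : Σ v : Ω, F v, x.1 ≤ u →
        ∀ hx : IsDownset res hom u (principalDownset hom x),
          (e ⟨principalDownset hom x, hx⟩).1 = fun y => hom y x) := by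
  classical
  -- membership in a downset is equivalent to the memLevel being above v
  have mem_iff : ∀ (S : ∀ v : Ω, Set (F v)), IsDownset res hom u S →
      ∀ (v : Ω) (x : F v), x ∈ S v ↔ v ≤ memLevel res S ⟨v, x⟩ := by
    intro S hS v x
    constructor
    · intro hx
      have hx' : res (le_refl v) x ∈ S v := by rw [hres_id]; exact hx
      exact le_sSup ⟨le_refl v, hx'⟩
    · intro hv
      have hsup : sSup {w : Ω | ∃ h : w ≤ v, res h x ∈ S w} = v :=
        le_antisymm (sSup_le fun w hw => hw.1) hv
      exact hS.2.2.1 v x _ hsup (fun w hw h => hw.2)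
  -- memLevel of a downset is a presheaf
  have fwd : ∀ S, IsDownset res hom u S → IsPresheafOn hom u (memLevel res S) := by
    intro S hS
    refine ⟨fun x => sSup_le fun v hv => le_inf (hS.1 v _ hv.2) hv.1, hS.2.2.2⟩
  -- memLevel inverts the "set of points below φ" construction
  have memLevel_inv : ∀ φ, IsPresheafOn hom u φ →
      memLevel res (fun v => {x : F v | v ≤ φ ⟨v, x⟩}) = φ := by
    intro φ hφ
    funext x
    apply le_antisymm
    · refine sSup_le fun v hv => ?_
      obtain ⟨h, hv⟩ := hv
      have h1 : hom x ⟨v, res h x.2⟩ = v := hkey2 h x.2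
      have h2 := hφ.2 x ⟨v, res h x.2⟩
      rw [h1] at h2
      calc v = v ⊓ v := (inf_idem v).symm
        _ ≤ v ⊓ φ ⟨v, res h x.2⟩ := inf_le_inf_left v hv
        _ ≤ φ x := h2
    · have h : φ x ≤ x.1 := (hφ.1 x).trans inf_le_right
      refine le_sSup ⟨h, ?_⟩
      show φ x ≤ φ ⟨φ x, res h x.2⟩
      have h1 : hom ⟨φ x, res h x.2⟩ x = φ x := hkey1 h x.2
      have h2 := hφ.2 ⟨φ x, res h x.2⟩ x
      rw [h1, inf_idem] at h2
      exact h2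
  -- the "set of points below φ" construction yields a downset
  have inv : ∀ φ, IsPresheafOn hom u φ →
      IsDownset res hom u (fun v => {x : F v | v ≤ φ ⟨v, x⟩}) := by
    intro φ hφ
    refine ⟨?_, ?_, ?_, ?_⟩
    · intro v x hx
      exact hx.trans ((hφ.1 _).trans inf_le_left)
    · intro v w h x hx
      have h1 : hom ⟨w, res h x⟩ ⟨v, x⟩ = w := hkey1 h x
      have h2 := hφ.2 ⟨w, res h x⟩ ⟨v, x⟩
      rw [h1] at h2
      show w ≤ φ ⟨w, res h x⟩
      calc w = w ⊓ v := (inf_eq_left.mpr h).symm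
        _ ≤ w ⊓ φ ⟨v, x⟩ := inf_le_inf_left w hx
        _ ≤ _ := h2
    · intro v x ws hsup hmem
      show v ≤ φ ⟨v, x⟩
      refine hsup.symm.trans_le (sSup_le fun w hw => ?_)
      have h : w ≤ v := hsup ▸ le_sSup hw
      have h1 : hom ⟨v, x⟩ ⟨w, res h x⟩ = w := hkey2 h x
      have h2 := hφ.2 ⟨v, x⟩ ⟨w, res h x⟩
      rw [h1] at h2
      exact le_trans (le_inf le_rfl (hmem w hw h)) h2
    · rw [memLevel_inv φ hφ]
      exact hφ.2
  -- the other round trip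
  have Sround : ∀ (S : ∀ v : Ω, Set (F v)) (hS : IsDownset res hom u S),
      (fun v => {x : F v | v ≤ memLevel res S ⟨v, x⟩}) = S := by
    intro S hS
    funext v
    ext x
    exact (mem_iff S hS v x).symm
  refine ⟨⟨fun S => ⟨memLevel res S.1, fwd S.1 S.2⟩,
          fun φ => ⟨fun v => {x : F v | v ≤ φ.1 ⟨v, x⟩}, inv φ.1 φ.2⟩,
          fun S => Subtype.ext (Sround S.1 S.2),
          fun φ => Subtype.ext (memLevel_inv φ.1 φ.2)⟩,
        fun S x => rfl, ?_⟩
  intro x hxu hx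
  funext y
  show memLevel res (principalDownset hom x) y = hom y x
  apply le_antisymm
  · refine sSup_le fun v hv => ?_
    obtain ⟨h, hv⟩ := hv
    have h1 : hom y ⟨v, res h y.2⟩ = v := hkey2 h y.2
    have h2 := hcomp y ⟨v, res h y.2⟩ x
    rw [h1] at h2
    exact le_trans (le_inf le_rfl hv) h2
  · have h : hom y x ≤ y.1 := (hhom_le y x).trans inf_le_right
    refine le_sSup ⟨h, ?_⟩
    show hom y x ≤ hom ⟨hom y x, res h y.2⟩ x
    have h1 : hom ⟨hom y x, res h y.2⟩ y = hom y x := hkey1 h y.2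
    have h2 := hcomp ⟨hom y x, res h y.2⟩ y x
    rw [h1] at h2
    exact le_trans (le_inf le_rfl le_rfl) h2
end
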